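/- Let δ > 0, let α and ε be real numbers with 0 ≤ α ≤ 1/8 and 0 ≤ ε ≤ δ²/16, let T be a real number with 0 < T ≤ 2/δ, and let f : [0, T] → ℝ be twice continuously differentiable with |f(0) − 1| ≤ α and |f''(x)| ≤ ε for all x ∈ [0, T]. Then for every s ∈ (0, T]: if f(s) ≤ 1/4, then f'(s) ≤ −δ/4. -/

import Mathlib

/-- If `f` is twice continuously differentiable on `[0,T]` with `|f(0) − 1| ≤ α`,
`|f''| ≤ ε`, where `0 ≤ α ≤ 1/8`, `0 ≤ ε ≤ δ²/16` and `0 < T ≤ 2/δ`, then smallness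
`f(s) ≤ 1/4` at some `s ∈ (0,T]` forces `f'(s) ≤ −δ/4`. -/
theorem small_value_implies_negative_slope
    (δ α ε T : ℝ) (hδ : 0 < δ) (hα0 : 0 ≤ α) (hα : α ≤ 1 / 8)
    (hε0 : 0 ≤ ε) (hε : ε ≤ δ ^ 2 / 16) (hT0 : 0 < T) (hT : T ≤ 2 / δ)
    (f f' f'' : ℝ → ℝ)
    (hf : ∀ x ∈ Set.Icc (0:ℝ) T, HasDerivWithinAt f (f' x) (Set.Icc 0 T) x)
    (hf' : ∀ x ∈ Set.Icc (0:ℝ) T, HasDerivWithinAt f' (f'' x) (Set.Icc 0 T) x)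
    (hf''cont : ContinuousOn f'' (Set.Icc 0 T))
    (h0 : |f 0 - 1| ≤ α)
    (hbd : ∀ x ∈ Set.Icc (0:ℝ) T, |f'' x| ≤ ε) :
    ∀ s ∈ Set.Ioc (0:ℝ) T, f s ≤ 1 / 4 → f' s ≤ -(δ / 4) := by
  intro s hs hfs
  obtain ⟨hs0, hsT⟩ := hs
  have hsmem : s ∈ Set.Icc (0:ℝ) T := ⟨hs0.le, hsT⟩
  have hIccT : Set.Icc (0:ℝ) s ⊆ Set.Icc 0 T := Set.Icc_subset_Icc le_rfl hsT
  set g : ℝ → ℝ := fun x => f' x - f' s - ε * (x - s) with hg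
  -- g is antitone on [0,T]
  have hgderiv : ∀ x ∈ Set.Ioo (0:ℝ) T, HasDerivAt g (f'' x - ε) x := by
    intro x hx
    have hmem : x ∈ Set.Icc (0:ℝ) T := ⟨hx.1.le, hx.2.le⟩
    have hnhds : Set.Icc (0:ℝ) T ∈ nhds x := Icc_mem_nhds hx.1 hx.2
    have h1 : HasDerivAt f' (f'' x) x := (hf' x hmem).hasDerivAt hnhds
    have h2 : HasDerivAt (fun x => ε * (x - s)) ε x := by
      simpa using ((hasDerivAt_id x).sub_const s).const_mul ε
    exact (h1.sub_const (f' s)).sub h2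
  have hintT : interior (Set.Icc (0:ℝ) T) = Set.Ioo 0 T := interior_Icc
  have hgcont : ContinuousOn g (Set.Icc 0 T) := by
    have : ContinuousOn f' (Set.Icc (0:ℝ) T) := fun x hx =>
      (hf' x hx).differentiableWithinAt.continuousWithinAt
    fun_prop
  have hganti : AntitoneOn g (Set.Icc 0 T) := by
    apply antitoneOn_of_deriv_nonpos (convex_Icc 0 T) hgcont
    · intro x hx
      rw [hintT] at hx
      exact (hgderiv x hx).differentiableAt.differentiableWithinAt
    · intro x hx
      rw [hintT] at hx
      rw [(hgderiv x hx).deriv]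
      have := hbd x ⟨hx.1.le, hx.2.le⟩
      have := abs_le.mp this
      linarith [this.2]
  have hgs : g s = 0 := by simp [hg]
  have hgnonneg : ∀ x ∈ Set.Icc (0:ℝ) s, 0 ≤ g x := by
    intro x hx
    have := hganti (hIccT hx) hsmem hx.2
    rw [hgs] at this; exact this
  -- k is monotone on [0,s]
  set k : ℝ → ℝ := fun x => f x - f s - f' s * (x - s) - ε * (x - s) ^ 2 / 2 with hk
  have hkderiv : ∀ x ∈ Set.Ioo (0:ℝ) s, HasDerivAt k (g x) x := by
    intro x hx
    have hxT : x ∈ Set.Ioo (0:ℝ) T := ⟨hx.1, lt_of_lt_of_le hx.2 hsT⟩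
    have hmem : x ∈ Set.Icc (0:ℝ) T := ⟨hxT.1.le, hxT.2.le⟩
    have hnhds : Set.Icc (0:ℝ) T ∈ nhds x := Icc_mem_nhds hxT.1 hxT.2
    have h1 : HasDerivAt f (f' x) x := (hf x hmem).hasDerivAt hnhds
    have h2 : HasDerivAt (fun x => f' s * (x - s)) (f' s) x := by
      simpa using ((hasDerivAt_id x).sub_const s).const_mul (f' s)
    have h3 : HasDerivAt (fun x => ε * (x - s) ^ 2 / 2) (ε * (x - s)) x := by
      have := (((hasDerivAt_id x).sub_const s).pow 2).const_mul ε
      have h4 := this.div_const 2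
      exact h4.congr_deriv (by simp only [id]; push_cast; ring)
    have := ((h1.sub_const (f s)).sub h2).sub h3
    exact this
  have hkcont : ContinuousOn k (Set.Icc 0 s) := by
    have hfc : ContinuousOn f (Set.Icc (0:ℝ) T) := fun x hx =>
      (hf x hx).differentiableWithinAt.continuousWithinAt
    have : ContinuousOn f (Set.Icc (0:ℝ) s) := hfc.mono hIccT
    fun_prop
  have hkmono : MonotoneOn k (Set.Icc 0 s) := by
    apply monotoneOn_of_deriv_nonneg (convex_Icc 0 s) hkcont
    · intro x hx
      rw [interior_Icc] at hx
      exact (hkderiv x hx).differentiableAt.differentiableWithinAt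
    · intro x hx
      rw [interior_Icc] at hx
      rw [(hkderiv x hx).deriv]
      exact hgnonneg x ⟨hx.1.le, hx.2.le⟩
  have hk0 : k 0 ≤ k s := hkmono ⟨le_rfl, hs0.le⟩ ⟨hs0.le, le_rfl⟩ hs0.le
  have hks : k s = 0 := by simp [hk]
  rw [hks] at hk0
  -- unpack k 0 ≤ 0
  have hk0' : f 0 - f s + f' s * s - ε * s ^ 2 / 2 ≤ 0 := by
    have h5 : k 0 = f 0 - f s + f' s * s - ε * s ^ 2 / 2 := by
      simp only [hk]
      ring
    linarith [h5 ▸ hk0]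
  -- bounds
  have hf0 : (7:ℝ)/8 ≤ f 0 := by
    have := abs_le.mp h0
    linarith [this.1]
  have hsδ : s * δ ≤ 2 := by
    have : s ≤ 2 / δ := le_trans hsT hT
    calc s * δ ≤ (2/δ) * δ := by nlinarith
    _ = 2 := by field_simp
  have hεs2 : ε * s ^ 2 / 2 ≤ 1 / 8 := by
    nlinarith [sq_nonneg s, sq_nonneg δ, mul_pos hs0 hδ]
  have key : f' s * s ≤ -(1/2) := by linarith
  nlinarith [mul_pos hs0 hδ]
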